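/- Let m be a positive integer with gcd(5,m)=1 and let b ∈ F_{2^{10m}} satisfy b^{10} + b^6 + b^5 + b^3 + b^2 + b + 1 = 0. Then Tr_{2m}^{10m}(b^{33}) = 0, where Tr_{2m}^{10m} is the relative trace from F_{2^{10m}} to F_{2^{2m}}. -/
import Mathlib


set_option linter.unreachableTactic false in
set_option linter.unusedTactic false in
set_option maxRecDepth 8000 in
set_option maxHeartbeats 2000000 in
/-- If `gcd(5,m)=1` and `b ∈ F_{2^{10m}}` satisfies
`b^10 + b^6 + b^5 + b^3 + b^2 + b + 1 = 0`, then `Tr_{2m}^{10m}(b^33) = 0`. -/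
theorem stmt_7 (m : ℕ) (hm : 0 < m) (h5 : Nat.gcd 5 m = 1)
    (F : Type*) [Field F] [Fintype F] (hF : Fintype.card F = 2 ^ (10 * m))
    (b : F) (hb : b ^ 10 + b ^ 6 + b ^ 5 + b ^ 3 + b ^ 2 + b + 1 = 0) :
    b ^ 33 + (b ^ 33) ^ (2 ^ (2 * m)) + (b ^ 33) ^ (2 ^ (4 * m))
      + (b ^ 33) ^ (2 ^ (6 * m)) + (b ^ 33) ^ (2 ^ (8 * m)) = 0 := by
  have h2 : (2 : F) = 0 := by
    have hc := FiniteField.cast_card_eq_zero F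
    rw [hF] at hc
    push_cast at hc
    have := pow_eq_zero_iff (n := 10 * m) (by positivity) |>.mp hc
    exact this
  -- b ^ 1024 = b
  have hq : b ^ 1024 = b := by
    linear_combination (((((((((b ^ 1014 + b ^ 1010) + (b ^ 1009 + b ^ 1007)) + ((b ^ 1005 + b ^ 1002) + (b ^ 1001 + b ^ 998))) + (((b ^ 994 + b ^ 993) + (b ^ 989 + b ^ 987)) + ((b ^ 985 + b ^ 984) + (b ^ 979 + b ^ 977)))) + ((((b ^ 975 + b ^ 973) + (b ^ 970 + b ^ 969)) + ((b ^ 968 + b ^ 966) + (b ^ 964 + b ^ 963))) + (((b ^ 962 + b ^ 959) + (b ^ 957 + b ^ 956)) + ((b ^ 953 + b ^ 948) + (b ^ 945 + b ^ 939))))) + (((((b ^ 937 + b ^ 936) + (b ^ 934 + b ^ 933)) + ((b ^ 932 + b ^ 930) + (b ^ 929 + b ^ 925))) + (((b ^ 923 + b ^ 922) + (b ^ 921 + b ^ 920)) + ((b ^ 918 + b ^ 917) + (b ^ 911 + b ^ 910)))) + ((((b ^ 905 + b ^ 904) + (b ^ 901 + b ^ 900)) + ((b ^ 899 + b ^ 898)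 + (b ^ 897 + b ^ 889))) + (((b ^ 887 + b ^ 885) + (b ^ 884 + b ^ 883)) + ((b ^ 878 + b ^ 877) + (b ^ 876 + b ^ 875)))))) + ((((((b ^ 874 + b ^ 873) + (b ^ 871 + b ^ 869)) + ((b ^ 868 + b ^ 867) + (b ^ 866 + b ^ 864))) + (((b ^ 859 + b ^ 858) + (b ^ 857 + b ^ 854)) + ((b ^ 846 + b ^ 845) + (b ^ 844 + b ^ 842)))) + ((((b ^ 838 + b ^ 836) + (b ^ 835 + b ^ 834)) + ((b ^ 831 + b ^ 830) + (b ^ 829 + b ^ 828))) + (((b ^ 826 + b ^ 823) + (b ^ 821 + b ^ 820)) + ((b ^ 818 + b ^ 814) + (b ^ 811 + b ^ 810))))) + (((((b ^ 808 + b ^ 806) + (b ^ 804 + b ^ 803)) + ((b ^ 802 + b ^ 800) + (b ^ 797 + b ^ 794))) + (((b ^ 792 + b ^ 791) + (b ^ 790 + b ^ 786)) + ((b ^ 785 + b ^ 784) + (b ^ 783 + b ^ 780)))) + ((((b ^ 779 + b ^ 778) + (b ^ 777 + b ^ 776)) + ((b ^ 775 + b ^ 771) + (b ^ 770 + b ^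 764))) + (((b ^ 759 + b ^ 757) + (b ^ 756 + b ^ 753)) + ((b ^ 752 + b ^ 747) + (b ^ 743 + b ^ 740))))))) + (((((((b ^ 737 + b ^ 734) + (b ^ 733 + b ^ 731)) + ((b ^ 730 + b ^ 729) + (b ^ 727 + b ^ 721))) + (((b ^ 720 + b ^ 718) + (b ^ 715 + b ^ 713)) + ((b ^ 710 + b ^ 708) + (b ^ 707 + b ^ 706)))) + ((((b ^ 705 + b ^ 702) + (b ^ 699 + b ^ 698)) + ((b ^ 695 + b ^ 694) + (b ^ 691 + b ^ 689))) + (((b ^ 687 + b ^ 686) + (b ^ 685 + b ^ 684)) + ((b ^ 678 + b ^ 676) + (b ^ 673 + b ^ 672))))) + (((((b ^ 670 + b ^ 669) + (b ^ 666 + b ^ 664)) + ((b ^ 663 + b ^ 661) + (b ^ 660 + b ^ 657))) + (((b ^ 656 + b ^ 655) + (b ^ 654 + b ^ 649)) + ((b ^ 648 + b ^ 646) + (b ^ 645 + b ^ 644)))) + ((((b ^ 643 + b ^ 639) + (b ^ 637 + b ^ 634)) + ((b ^ 631 + b ^ 630) + (b ^ 629 + b ^ 628))) + (((b ^ 627 +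 b ^ 626) + (b ^ 625 + b ^ 622)) + ((b ^ 620 + b ^ 618) + (b ^ 616 + b ^ 615)))))) + ((((((b ^ 613 + b ^ 612) + (b ^ 610 + b ^ 609)) + ((b ^ 608 + b ^ 607) + (b ^ 605 + b ^ 603))) + (((b ^ 600 + b ^ 596) + (b ^ 595 + b ^ 594)) + ((b ^ 591 + b ^ 590) + (b ^ 586 + b ^ 585)))) + ((((b ^ 582 + b ^ 579) + (b ^ 578 + b ^ 577)) + ((b ^ 575 + b ^ 574) + (b ^ 573 + b ^ 572))) + (((b ^ 571 + b ^ 570) + (b ^ 569 + b ^ 568)) + ((b ^ 567 + b ^ 566) + (b ^ 561 + b ^ 558))))) + (((((b ^ 557 + b ^ 553) + (b ^ 549 + b ^ 548)) + ((b ^ 547 + b ^ 546) + (b ^ 544 + b ^ 543))) + (((b ^ 542 + b ^ 541) + (b ^ 538 + b ^ 537)) + ((b ^ 535 + b ^ 534) + (b ^ 533 + b ^ 532)))) + ((((b ^ 531 + b ^ 528) + (b ^ 527 + b ^ 524)) + ((b ^ 523 + b ^ 522) + (b ^ 520 + b ^ 517))) + (((b ^ 516 + b ^ 514) + (b ^ 510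 + b ^ 509)) + ((b ^ 507 + b ^ 506) + (b ^ 505 + b ^ 499)))))))) + ((((((((b ^ 498 + b ^ 497) + (b ^ 490 + b ^ 489)) + ((b ^ 487 + b ^ 486) + (b ^ 484 + b ^ 481))) + (((b ^ 476 + b ^ 475) + (b ^ 473 + b ^ 471)) + ((b ^ 470 + b ^ 468) + (b ^ 467 + b ^ 466)))) + ((((b ^ 465 + b ^ 464) + (b ^ 463 + b ^ 461)) + ((b ^ 460 + b ^ 459) + (b ^ 458 + b ^ 457))) + (((b ^ 455 + b ^ 454) + (b ^ 453 + b ^ 451)) + ((b ^ 449 + b ^ 440) + (b ^ 439 + b ^ 436))))) + (((((b ^ 434 + b ^ 433) + (b ^ 432 + b ^ 431)) + ((b ^ 430 + b ^ 428) + (b ^ 426 + b ^ 424))) + (((b ^ 423 + b ^ 420) + (b ^ 418 + b ^ 415)) + ((b ^ 414 + b ^ 413) + (b ^ 412 + b ^ 411)))) + ((((b ^ 409 + b ^ 405) + (b ^ 404 + b ^ 403)) + ((b ^ 402 + b ^ 401) + (b ^ 400 + b ^ 399))) + (((b ^ 398 + b ^ 396) + (b ^ 393 + b ^ 392)) + ((b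 ^ 391 + b ^ 390) + (b ^ 387 + b ^ 385)))))) + ((((((b ^ 384 + b ^ 383) + (b ^ 381 + b ^ 379)) + ((b ^ 378 + b ^ 374) + (b ^ 373 + b ^ 371))) + (((b ^ 370 + b ^ 365) + (b ^ 364 + b ^ 363)) + ((b ^ 361 + b ^ 360) + (b ^ 357 + b ^ 356)))) + ((((b ^ 354 + b ^ 351) + (b ^ 350 + b ^ 349)) + ((b ^ 345 + b ^ 344) + (b ^ 342 + b ^ 337))) + (((b ^ 335 + b ^ 331) + (b ^ 329 + b ^ 327)) + ((b ^ 322 + b ^ 315) + (b ^ 314 + b ^ 313))))) + (((((b ^ 312 + b ^ 311) + (b ^ 308 + b ^ 304)) + ((b ^ 298 + b ^ 297) + (b ^ 296 + b ^ 295))) + (((b ^ 291 + b ^ 290) + (b ^ 289 + b ^ 285)) + ((b ^ 282 + b ^ 280) + (b ^ 279 + b ^ 272)))) + ((((b ^ 269 + b ^ 268) + (b ^ 267 + b ^ 264)) + ((b ^ 263 + b ^ 262) + (b ^ 259 + b ^ 257))) + (((b ^ 253 + b ^ 252) + (b ^ 251 + b ^ 249)) + ((b ^ 248 + b ^ 247)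 + (b ^ 245 + b ^ 244))))))) + (((((((b ^ 243 + b ^ 240) + (b ^ 239 + b ^ 237)) + ((b ^ 235 + b ^ 234) + (b ^ 233 + b ^ 232))) + (((b ^ 231 + b ^ 230) + (b ^ 227 + b ^ 226)) + ((b ^ 225 + b ^ 223) + (b ^ 222 + b ^ 220)))) + ((((b ^ 219 + b ^ 218) + (b ^ 215 + b ^ 212)) + ((b ^ 208 + b ^ 206) + (b ^ 200 + b ^ 197))) + (((b ^ 195 + b ^ 190) + (b ^ 189 + b ^ 185)) + ((b ^ 184 + b ^ 183) + (b ^ 181 + b ^ 179))))) + (((((b ^ 177 + b ^ 173) + (b ^ 172 + b ^ 169)) + ((b ^ 168 + b ^ 166) + (b ^ 165 + b ^ 163))) + (((b ^ 162 + b ^ 160) + (b ^ 158 + b ^ 157)) + ((b ^ 154 + b ^ 153) + (b ^ 152 + b ^ 147)))) + ((((b ^ 145 + b ^ 144) + (b ^ 143 + b ^ 141)) + ((b ^ 140 + b ^ 139) + (b ^ 138 + b ^ 136))) + (((b ^ 135 + b ^ 134) + (b ^ 130 + b ^ 128)) + ((b ^ 127 + b ^ 125) + (b ^ 123 + b ^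 121)))))) + ((((((b ^ 119 + b ^ 117) + (b ^ 116 + b ^ 115)) + ((b ^ 114 + b ^ 113) + (b ^ 109 + b ^ 104))) + (((b ^ 103 + b ^ 102) + (b ^ 101 + b ^ 99)) + ((b ^ 97 + b ^ 96) + (b ^ 94 + b ^ 92)))) + ((((b ^ 91 + b ^ 90) + (b ^ 88 + b ^ 87)) + ((b ^ 85 + b ^ 83) + (b ^ 79 + b ^ 75))) + (((b ^ 73 + b ^ 72) + (b ^ 68 + b ^ 65)) + ((b ^ 64 + b ^ 63) + (b ^ 62 + b ^ 60))))) + (((((b ^ 59 + b ^ 57) + (b ^ 50 + b ^ 48)) + ((b ^ 47 + b ^ 46) + (b ^ 45 + b ^ 44))) + (((b ^ 43 + b ^ 42) + (b ^ 40 + b ^ 39)) + ((b ^ 37 + b ^ 36) + (b ^ 32 + b ^ 31)))) + ((((b ^ 30 + b ^ 29) + (b ^ 28 + b ^ 26)) + ((b ^ 25 + b ^ 22) + (b ^ 19 + b ^ 17))) + (((b ^ 15 + b ^ 12) + (b ^ 10 + b ^ 8)) + ((b ^ 7 + b ^ 5) + (b ^ 2 + b))))))))) * hb + ((((((((((-1)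 * b ^ 1020 + ((-1) * b ^ 1019 + (-1) * b ^ 1017)) + (((-1) * b ^ 1016 + (-2) * b ^ 1015) + ((-1) * b ^ 1014 + (-1) * b ^ 1013))) + ((((-2) * b ^ 1012 + (-2) * b ^ 1011) + ((-2) * b ^ 1010 + (-1) * b ^ 1009)) + (((-2) * b ^ 1008 + (-2) * b ^ 1007) + ((-1) * b ^ 1006 + (-1) * b ^ 1005)))) + (((((-2) * b ^ 1004 + (-2) * b ^ 1003) + ((-1) * b ^ 1002 + (-1) * b ^ 1001)) + (((-1) * b ^ 1000 + (-2) * b ^ 999) + ((-1) * b ^ 998 + (-1) * b ^ 997))) + ((((-1) * b ^ 996 + (-2) * b ^ 995) + ((-2) * b ^ 994 + (-1) * b ^ 993)) + (((-1) * b ^ 992 + (-1) * b ^ 991) + ((-2) * b ^ 990 + (-2) * b ^ 989))))) + ((((((-1) * b ^ 988 + (-2) * b ^ 987) + ((-1) * b ^ 986 + (-2) * b ^ 985)) + (((-1) * b ^ 984 + (-1) * b ^ 983) + ((-1) * b ^ 982 + (-1) * b ^ 981))) + ((((-2) * b ^ 980 + (-2) * b ^ 979) + ((-2) * b ^ 978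 + (-1) * b ^ 977)) + (((-2) * b ^ 976 + (-2) * b ^ 975) + ((-2) * b ^ 974 + (-2) * b ^ 973)))) + (((((-2) * b ^ 972 + (-2) * b ^ 971) + ((-2) * b ^ 970 + (-3) * b ^ 969)) + (((-2) * b ^ 968 + (-2) * b ^ 967) + ((-2) * b ^ 966 + (-2) * b ^ 965))) + ((((-2) * b ^ 964 + (-2) * b ^ 963) + ((-2) * b ^ 962 + (-1) * b ^ 961)) + (((-1) * b ^ 960 + (-2) * b ^ 959) + ((-2) * b ^ 958 + (-1) * b ^ 957)))))) + ((((((-1) * b ^ 956 + ((-1) * b ^ 955 + (-1) * b ^ 954)) + (((-1) * b ^ 953 + (-1) * b ^ 951) + ((-1) * b ^ 950 + (-1) * b ^ 949))) + ((((-1) * b ^ 948 + (-1) * b ^ 947) + ((-1) * b ^ 946 + (-1) * b ^ 945)) + (((-1) * b ^ 944 + (-1) * b ^ 943) + ((-2) * b ^ 942 + (-1) * b ^ 941)))) + (((((-2) * b ^ 940 + (-3) * b ^ 939) + ((-2) * b ^ 938 + (-2) * b ^ 937)) + (((-2) * b ^ 936 + (-3) * b ^ 935) + ((-2) * b ^ 934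 + (-2) * b ^ 933))) + ((((-2) * b ^ 932 + (-2) * b ^ 931) + ((-2) * b ^ 930 + (-1) * b ^ 929)) + (((-2) * b ^ 928 + (-2) * b ^ 927) + ((-2) * b ^ 926 + (-2) * b ^ 925))))) + ((((((-2) * b ^ 924 + (-3) * b ^ 923) + ((-2) * b ^ 922 + (-2) * b ^ 921)) + (((-2) * b ^ 920 + (-1) * b ^ 919) + ((-1) * b ^ 918 + (-1) * b ^ 917))) + ((((-1) * b ^ 916 + (-1) * b ^ 915) + ((-1) * b ^ 914 + (-1) * b ^ 913)) + (((-1) * b ^ 912 + (-2) * b ^ 911) + ((-2) * b ^ 910 + (-1) * b ^ 909)))) + (((((-1) * b ^ 908 + (-2) * b ^ 907) + ((-2) * b ^ 906 + (-2) * b ^ 905)) + (((-2) * b ^ 904 + (-2) * b ^ 903) + ((-2) * b ^ 902 + (-2) * b ^ 901))) + ((((-2) * b ^ 900 + (-2) * b ^ 899) + ((-1) * b ^ 898 + (-1) * b ^ 897)) + (((-1) * b ^ 895 + (-1) * b ^ 894) + ((-1) * b ^ 893 + (-1) * b ^ 892))))))) + (((((((-1) * b ^ 891 + ((-2) * b ^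 890 + (-2) * b ^ 889)) + (((-2) * b ^ 888 + (-2) * b ^ 887) + ((-2) * b ^ 886 + (-2) * b ^ 885))) + ((((-2) * b ^ 884 + (-2) * b ^ 883) + ((-1) * b ^ 882 + (-2) * b ^ 881)) + (((-2) * b ^ 880 + (-3) * b ^ 879) + ((-3) * b ^ 878 + (-3) * b ^ 877)))) + (((((-3) * b ^ 876 + (-2) * b ^ 875) + ((-3) * b ^ 874 + (-2) * b ^ 873)) + (((-2) * b ^ 872 + (-2) * b ^ 871) + ((-2) * b ^ 870 + (-3) * b ^ 869))) + ((((-2) * b ^ 868 + (-2) * b ^ 867) + ((-1) * b ^ 866 + (-1) * b ^ 865)) + (((-2) * b ^ 864 + (-1) * b ^ 863) + ((-1) * b ^ 862 + (-1) * b ^ 861))))) + ((((((-2) * b ^ 860 + (-2) * b ^ 859) + ((-1) * b ^ 858 + (-1) * b ^ 857)) + (((-1) * b ^ 856 + (-1) * b ^ 855) + ((-1) * b ^ 854 + (-1) * b ^ 852))) + ((((-1) * b ^ 851 + (-1) * b ^ 850) + ((-1) * b ^ 849 + (-2) * b ^ 848)) + (((-2) * b ^ 847 + (-2) * b ^ 846)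 + ((-2) * b ^ 845 + (-2) * b ^ 844)))) + (((((-1) * b ^ 843 + (-1) * b ^ 842) + ((-2) * b ^ 841 + (-2) * b ^ 840)) + (((-2) * b ^ 839 + (-2) * b ^ 838) + ((-2) * b ^ 837 + (-3) * b ^ 836))) + ((((-2) * b ^ 835 + (-2) * b ^ 834) + ((-2) * b ^ 833 + (-2) * b ^ 832)) + (((-3) * b ^ 831 + (-2) * b ^ 830) + ((-2) * b ^ 829 + (-2) * b ^ 828)))))) + ((((((-1) * b ^ 827 + ((-2) * b ^ 826 + (-1) * b ^ 825)) + (((-2) * b ^ 824 + (-2) * b ^ 823) + ((-1) * b ^ 822 + (-2) * b ^ 821))) + ((((-2) * b ^ 820 + (-1) * b ^ 819) + ((-1) * b ^ 818 + (-1) * b ^ 817)) + (((-2) * b ^ 816 + (-1) * b ^ 815) + ((-2) * b ^ 814 + (-2) * b ^ 813)))) + (((((-2) * b ^ 812 + (-2) * b ^ 811) + ((-2) * b ^ 810 + (-2) * b ^ 809)) + (((-2) * b ^ 808 + (-2) * b ^ 807) + ((-2) * b ^ 806 + (-2) * b ^ 805))) + ((((-2) * b ^ 804 + (-2) * b ^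 803) + ((-2) * b ^ 802 + (-1) * b ^ 801)) + (((-2) * b ^ 800 + (-1) * b ^ 799) + ((-1) * b ^ 798 + (-2) * b ^ 797))))) + ((((((-2) * b ^ 796 + (-2) * b ^ 795) + ((-2) * b ^ 794 + (-2) * b ^ 793)) + (((-2) * b ^ 792 + (-2) * b ^ 791) + ((-2) * b ^ 790 + (-2) * b ^ 789))) + ((((-2) * b ^ 788 + (-2) * b ^ 787) + ((-3) * b ^ 786 + (-3) * b ^ 785)) + (((-2) * b ^ 784 + (-2) * b ^ 783) + ((-2) * b ^ 782 + (-3) * b ^ 781)))) + (((((-3) * b ^ 780 + (-2) * b ^ 779) + ((-2) * b ^ 778 + (-2) * b ^ 777)) + (((-2) * b ^ 776 + (-1) * b ^ 775) + ((-1) * b ^ 774 + (-1) * b ^ 773))) + ((((-1) * b ^ 772 + (-1) * b ^ 771) + ((-1) * b ^ 770 + (-1) * b ^ 769)) + (((-1) * b ^ 767 + (-1) * b ^ 766) + ((-1) * b ^ 765 + (-1) * b ^ 764)))))))) + ((((((((-1) * b ^ 763 + ((-2) * b ^ 762 + (-1) * b ^ 761)) + (((-1) * b ^ 760 + (-2)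 * b ^ 759) + ((-2) * b ^ 758 + (-2) * b ^ 757))) + ((((-1) * b ^ 756 + (-1) * b ^ 755) + ((-1) * b ^ 754 + (-2) * b ^ 753)) + (((-1) * b ^ 752 + (-1) * b ^ 750) + ((-1) * b ^ 749 + (-1) * b ^ 748)))) + (((((-1) * b ^ 747 + (-1) * b ^ 746) + ((-1) * b ^ 745 + (-1) * b ^ 744)) + (((-2) * b ^ 743 + (-1) * b ^ 742) + ((-1) * b ^ 741 + (-2) * b ^ 740))) + ((((-2) * b ^ 739 + (-1) * b ^ 738) + ((-2) * b ^ 737 + (-2) * b ^ 736)) + (((-2) * b ^ 735 + (-2) * b ^ 734) + ((-2) * b ^ 733 + (-2) * b ^ 732))))) + ((((((-2) * b ^ 731 + (-2) * b ^ 730) + ((-1) * b ^ 729 + (-1) * b ^ 728)) + (((-1) * b ^ 727 + (-1) * b ^ 726) + ((-1) * b ^ 725 + (-1) * b ^ 724))) + ((((-2) * b ^ 723 + (-1) * b ^ 722) + ((-2) * b ^ 721 + (-2) * b ^ 720)) + (((-1) * b ^ 719 + (-2) * b ^ 718) + ((-1) * b ^ 717 + (-2) * b ^ 716)))) + (((((-2)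 * b ^ 715 + (-1) * b ^ 714) + ((-2) * b ^ 713 + (-2) * b ^ 712)) + (((-2) * b ^ 711 + (-2) * b ^ 710) + ((-2) * b ^ 709 + (-3) * b ^ 708))) + ((((-2) * b ^ 707 + (-1) * b ^ 706) + ((-2) * b ^ 705 + (-2) * b ^ 704)) + (((-1) * b ^ 703 + (-1) * b ^ 702) + ((-2) * b ^ 701 + (-2) * b ^ 700)))))) + ((((((-2) * b ^ 699 + ((-1) * b ^ 698 + (-2) * b ^ 697)) + (((-2) * b ^ 696 + (-2) * b ^ 695) + ((-2) * b ^ 694 + (-1) * b ^ 693))) + ((((-2) * b ^ 692 + (-2) * b ^ 691) + ((-2) * b ^ 690 + (-2) * b ^ 689)) + (((-2) * b ^ 688 + (-2) * b ^ 687) + ((-2) * b ^ 686 + (-1) * b ^ 685)))) + (((((-1) * b ^ 684 + (-1) * b ^ 683) + ((-1) * b ^ 682 + (-1) * b ^ 681)) + (((-1) * b ^ 680 + (-2) * b ^ 679) + ((-2) * b ^ 678 + (-1) * b ^ 677))) + ((((-2) * b ^ 676 + (-2) * b ^ 675) + ((-2) * b ^ 674 + (-2) * b ^ 673)) + (((-2)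 * b ^ 672 + (-2) * b ^ 671) + ((-2) * b ^ 670 + (-2) * b ^ 669))))) + ((((((-1) * b ^ 668 + (-2) * b ^ 667) + ((-3) * b ^ 666 + (-2) * b ^ 665)) + (((-2) * b ^ 664 + (-2) * b ^ 663) + ((-2) * b ^ 662 + (-2) * b ^ 661))) + ((((-2) * b ^ 660 + (-2) * b ^ 659) + ((-2) * b ^ 658 + (-2) * b ^ 657)) + (((-2) * b ^ 656 + (-2) * b ^ 655) + ((-2) * b ^ 654 + (-1) * b ^ 653)))) + (((((-1) * b ^ 652 + (-2) * b ^ 651) + ((-2) * b ^ 650 + (-3) * b ^ 649)) + (((-2) * b ^ 648 + (-2) * b ^ 647) + ((-2) * b ^ 646 + (-2) * b ^ 645))) + ((((-2) * b ^ 644 + (-1) * b ^ 643) + ((-1) * b ^ 642 + (-1) * b ^ 641)) + (((-2) * b ^ 640 + (-2) * b ^ 639) + ((-1) * b ^ 638 + (-2) * b ^ 637))))))) + (((((((-2) * b ^ 636 + ((-2) * b ^ 635 + (-2) * b ^ 634)) + (((-2) * b ^ 633 + (-3) * b ^ 632) + ((-3) * b ^ 631 + (-3) * b ^ 630))) + ((((-2)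 * b ^ 629 + (-3) * b ^ 628) + ((-2) * b ^ 627 + (-2) * b ^ 626)) + (((-2) * b ^ 625 + (-1) * b ^ 624) + ((-2) * b ^ 623 + (-2) * b ^ 622)))) + (((((-2) * b ^ 621 + (-2) * b ^ 620) + ((-2) * b ^ 619 + (-3) * b ^ 618)) + (((-2) * b ^ 617 + (-2) * b ^ 616) + ((-3) * b ^ 615 + (-2) * b ^ 614))) + ((((-3) * b ^ 613 + (-2) * b ^ 612) + ((-2) * b ^ 611 + (-3) * b ^ 610)) + (((-2) * b ^ 609 + (-2) * b ^ 608) + ((-1) * b ^ 607 + (-2) * b ^ 606))))) + ((((((-2) * b ^ 605 + (-1) * b ^ 604) + ((-1) * b ^ 603 + (-1) * b ^ 602)) + (((-2) * b ^ 601 + (-2) * b ^ 600) + ((-1) * b ^ 599 + (-1) * b ^ 598))) + ((((-2) * b ^ 597 + (-3) * b ^ 596) + ((-2) * b ^ 595 + (-1) * b ^ 594)) + (((-1) * b ^ 593 + (-2) * b ^ 592) + ((-2) * b ^ 591 + (-1) * b ^ 590)))) + (((((-1) * b ^ 589 + (-2) * b ^ 588) + ((-2) * b ^ 587 + (-1)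 * b ^ 586)) + (((-2) * b ^ 585 + (-2) * b ^ 584) + ((-2) * b ^ 583 + (-2) * b ^ 582))) + ((((-2) * b ^ 581 + (-3) * b ^ 580) + ((-3) * b ^ 579 + (-3) * b ^ 578)) + (((-3) * b ^ 577 + (-3) * b ^ 576) + ((-3) * b ^ 575 + (-3) * b ^ 574)))))) + ((((((-3) * b ^ 573 + ((-3) * b ^ 572 + (-3) * b ^ 571)) + (((-2) * b ^ 570 + (-2) * b ^ 569) + ((-2) * b ^ 568 + (-2) * b ^ 567))) + ((((-1) * b ^ 566 + (-1) * b ^ 564) + ((-2) * b ^ 563 + (-1) * b ^ 562)) + (((-1) * b ^ 561 + (-1) * b ^ 560) + ((-2) * b ^ 559 + (-2) * b ^ 558)))) + (((((-1) * b ^ 557 + (-1) * b ^ 556) + ((-1) * b ^ 555 + (-2) * b ^ 554)) + (((-2) * b ^ 553 + (-2) * b ^ 552) + ((-2) * b ^ 551 + (-2) * b ^ 550))) + ((((-3) * b ^ 549 + (-3) * b ^ 548) + ((-3) * b ^ 547 + (-2) * b ^ 546)) + (((-2) * b ^ 545 + (-3) * b ^ 544) + ((-3) * b ^ 543 + (-2)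 * b ^ 542))))) + ((((((-2) * b ^ 541 + (-2) * b ^ 540) + ((-2) * b ^ 539 + (-3) * b ^ 538)) + (((-3) * b ^ 537 + (-2) * b ^ 536) + ((-2) * b ^ 535 + (-3) * b ^ 534))) + ((((-3) * b ^ 533 + (-2) * b ^ 532) + ((-1) * b ^ 531 + (-2) * b ^ 530)) + (((-2) * b ^ 529 + (-2) * b ^ 528) + ((-2) * b ^ 527 + (-2) * b ^ 526)))) + (((((-2) * b ^ 525 + (-2) * b ^ 524) + ((-2) * b ^ 523 + (-2) * b ^ 522)) + (((-1) * b ^ 521 + (-2) * b ^ 520) + ((-2) * b ^ 519 + (-1) * b ^ 518))) + ((((-2) * b ^ 517 + (-2) * b ^ 516) + ((-2) * b ^ 515 + (-1) * b ^ 514)) + (((-1) * b ^ 513 + (-2) * b ^ 512) + ((-2) * b ^ 511 + (-2) * b ^ 510))))))))) + (((((((((-2) * b ^ 509 + ((-2) * b ^ 508 + (-2) * b ^ 507)) + (((-1) * b ^ 506 + (-1) * b ^ 505) + ((-1) * b ^ 504 + (-1) * b ^ 503))) + ((((-1) * b ^ 502 + (-1) * b ^ 501) + ((-2) * b ^ 500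 + (-2) * b ^ 499)) + (((-1) * b ^ 498 + (-1) * b ^ 497) + ((-1) * b ^ 496 + (-1) * b ^ 495)))) + (((((-1) * b ^ 494 + (-1) * b ^ 493) + ((-2) * b ^ 492 + (-2) * b ^ 491)) + (((-2) * b ^ 490 + (-2) * b ^ 489) + ((-1) * b ^ 488 + (-2) * b ^ 487))) + ((((-2) * b ^ 486 + (-1) * b ^ 485) + ((-1) * b ^ 484 + (-1) * b ^ 483)) + (((-1) * b ^ 482 + (-2) * b ^ 481) + ((-1) * b ^ 480 + (-1) * b ^ 479))))) + ((((((-2) * b ^ 478 + (-2) * b ^ 477) + ((-3) * b ^ 476 + (-2) * b ^ 475)) + (((-2) * b ^ 474 + (-3) * b ^ 473) + ((-2) * b ^ 472 + (-3) * b ^ 471))) + ((((-3) * b ^ 470 + (-3) * b ^ 469) + ((-3) * b ^ 468 + (-3) * b ^ 467)) + (((-3) * b ^ 466 + (-3) * b ^ 465) + ((-3) * b ^ 464 + (-3) * b ^ 463)))) + (((((-2) * b ^ 462 + (-3) * b ^ 461) + ((-3) * b ^ 460 + (-3) * b ^ 459)) + (((-2) * b ^ 458 + (-2) * b ^ 457)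 + ((-2) * b ^ 456 + (-2) * b ^ 455))) + ((((-2) * b ^ 454 + (-1) * b ^ 453) + ((-1) * b ^ 452 + (-1) * b ^ 451)) + (((-1) * b ^ 450 + (-1) * b ^ 449) + ((-1) * b ^ 446 + (-1) * b ^ 445)))))) + ((((((-1) * b ^ 444 + ((-1) * b ^ 443 + (-2) * b ^ 442)) + (((-2) * b ^ 441 + (-2) * b ^ 440) + ((-2) * b ^ 439 + (-2) * b ^ 438))) + ((((-2) * b ^ 437 + (-3) * b ^ 436) + ((-2) * b ^ 435 + (-3) * b ^ 434)) + (((-3) * b ^ 433 + (-2) * b ^ 432) + ((-2) * b ^ 431 + (-2) * b ^ 430)))) + (((((-2) * b ^ 429 + (-2) * b ^ 428) + ((-1) * b ^ 427 + (-2) * b ^ 426)) + (((-2) * b ^ 425 + (-2) * b ^ 424) + ((-2) * b ^ 423 + (-1) * b ^ 422))) + ((((-2) * b ^ 421 + (-2) * b ^ 420) + ((-2) * b ^ 419 + (-2) * b ^ 418)) + (((-2) * b ^ 417 + (-2) * b ^ 416) + ((-3) * b ^ 415 + (-3) * b ^ 414))))) + ((((((-2) * b ^ 413 + (-2) * b ^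 412) + ((-2) * b ^ 411 + (-2) * b ^ 410)) + (((-2) * b ^ 409 + (-2) * b ^ 408) + ((-2) * b ^ 407 + (-3) * b ^ 406))) + ((((-3) * b ^ 405 + (-3) * b ^ 404) + ((-3) * b ^ 403 + (-3) * b ^ 402)) + (((-3) * b ^ 401 + (-2) * b ^ 400) + ((-2) * b ^ 399 + (-2) * b ^ 398)))) + (((((-2) * b ^ 397 + (-2) * b ^ 396) + ((-2) * b ^ 395 + (-2) * b ^ 394)) + (((-3) * b ^ 393 + (-2) * b ^ 392) + ((-2) * b ^ 391 + (-2) * b ^ 390))) + ((((-2) * b ^ 389 + (-2) * b ^ 388) + ((-2) * b ^ 387 + (-2) * b ^ 386)) + (((-2) * b ^ 385 + (-3) * b ^ 384) + ((-2) * b ^ 383 + (-1) * b ^ 382))))))) + (((((((-2) * b ^ 381 + ((-2) * b ^ 380 + (-2) * b ^ 379)) + (((-1) * b ^ 378 + (-1) * b ^ 377) + ((-2) * b ^ 376 + (-2) * b ^ 375))) + ((((-2) * b ^ 374 + (-2) * b ^ 373) + ((-1) * b ^ 372 + (-2) * b ^ 371)) + (((-2) * b ^ 370 + (-1) * b ^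 369) + ((-1) * b ^ 368 + (-2) * b ^ 367)))) + (((((-3) * b ^ 366 + (-2) * b ^ 365) + ((-2) * b ^ 364 + (-2) * b ^ 363)) + (((-2) * b ^ 362 + (-2) * b ^ 361) + ((-2) * b ^ 360 + (-2) * b ^ 359))) + ((((-1) * b ^ 358 + (-2) * b ^ 357) + ((-2) * b ^ 356 + (-2) * b ^ 355)) + (((-2) * b ^ 354 + (-1) * b ^ 353) + ((-2) * b ^ 352 + (-2) * b ^ 351))))) + ((((((-2) * b ^ 350 + (-1) * b ^ 349) + ((-1) * b ^ 348 + (-2) * b ^ 347)) + (((-1) * b ^ 346 + (-2) * b ^ 345) + ((-1) * b ^ 344 + (-1) * b ^ 343))) + ((((-1) * b ^ 342 + (-1) * b ^ 341) + ((-1) * b ^ 340 + (-1) * b ^ 339)) + (((-1) * b ^ 338 + (-2) * b ^ 337) + ((-1) * b ^ 336 + (-1) * b ^ 335)))) + (((((-1) * b ^ 334 + (-1) * b ^ 333) + ((-2) * b ^ 332 + (-1) * b ^ 331)) + (((-1) * b ^ 330 + (-1) * b ^ 329) + ((-1) * b ^ 328 + (-1) * b ^ 327))) + ((((-1) * b ^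 325 + (-1) * b ^ 324) + ((-1) * b ^ 323 + (-1) * b ^ 322)) + (((-1) * b ^ 321 + (-1) * b ^ 320) + ((-1) * b ^ 319 + (-2) * b ^ 318)))))) + ((((((-2) * b ^ 317 + ((-2) * b ^ 316 + (-2) * b ^ 315)) + (((-3) * b ^ 314 + (-2) * b ^ 313) + ((-1) * b ^ 312 + (-1) * b ^ 311))) + ((((-1) * b ^ 310 + (-1) * b ^ 309) + ((-1) * b ^ 308 + (-1) * b ^ 307)) + (((-1) * b ^ 306 + (-1) * b ^ 305) + ((-1) * b ^ 304 + (-1) * b ^ 303)))) + (((((-1) * b ^ 302 + (-2) * b ^ 301) + ((-2) * b ^ 300 + (-2) * b ^ 299)) + (((-2) * b ^ 298 + (-2) * b ^ 297) + ((-2) * b ^ 296 + (-2) * b ^ 295))) + ((((-1) * b ^ 294 + (-1) * b ^ 293) + ((-2) * b ^ 292 + (-2) * b ^ 291)) + (((-2) * b ^ 290 + (-1) * b ^ 289) + ((-1) * b ^ 288 + (-1) * b ^ 287))))) + ((((((-1) * b ^ 286 + (-2) * b ^ 285) + ((-1) * b ^ 284 + (-1) * b ^ 283)) + (((-2) * b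 ^ 282 + (-1) * b ^ 281) + ((-1) * b ^ 280 + (-1) * b ^ 279))) + ((((-1) * b ^ 278 + (-1) * b ^ 277) + ((-1) * b ^ 275 + (-2) * b ^ 274)) + (((-2) * b ^ 273 + (-2) * b ^ 272) + ((-1) * b ^ 271 + (-2) * b ^ 270)))) + (((((-3) * b ^ 269 + (-2) * b ^ 268) + ((-2) * b ^ 267 + (-1) * b ^ 266)) + (((-2) * b ^ 265 + (-2) * b ^ 264) + ((-2) * b ^ 263 + (-2) * b ^ 262))) + ((((-1) * b ^ 261 + (-1) * b ^ 260) + ((-2) * b ^ 259 + (-2) * b ^ 258)) + (((-2) * b ^ 257 + (-1) * b ^ 256) + ((-2) * b ^ 255 + (-3) * b ^ 254)))))))) + ((((((((-3) * b ^ 253 + ((-2) * b ^ 252 + (-2) * b ^ 251)) + (((-3) * b ^ 250 + (-3) * b ^ 249) + ((-2) * b ^ 248 + (-2) * b ^ 247))) + ((((-2) * b ^ 246 + (-3) * b ^ 245) + ((-2) * b ^ 244 + (-2) * b ^ 243)) + (((-2) * b ^ 242 + (-2) * b ^ 241) + ((-3) * b ^ 240 + (-2) * b ^ 239)))) + (((((-2)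 * b ^ 238 + (-3) * b ^ 237) + ((-3) * b ^ 236 + (-3) * b ^ 235)) + (((-2) * b ^ 234 + (-3) * b ^ 233) + ((-3) * b ^ 232 + (-2) * b ^ 231))) + ((((-2) * b ^ 230 + (-2) * b ^ 229) + ((-3) * b ^ 228 + (-2) * b ^ 227)) + (((-2) * b ^ 226 + (-3) * b ^ 225) + ((-2) * b ^ 224 + (-2) * b ^ 223))))) + ((((((-2) * b ^ 222 + (-2) * b ^ 221) + ((-2) * b ^ 220 + (-1) * b ^ 219)) + (((-2) * b ^ 218 + (-1) * b ^ 217) + ((-1) * b ^ 216 + (-1) * b ^ 215))) + ((((-1) * b ^ 214 + (-1) * b ^ 213) + ((-1) * b ^ 212 + (-1) * b ^ 211)) + (((-1) * b ^ 210 + (-1) * b ^ 209) + ((-1) * b ^ 208 + (-1) * b ^ 207)))) + (((((-1) * b ^ 206 + (-1) * b ^ 205) + ((-1) * b ^ 203 + (-1) * b ^ 202)) + (((-1) * b ^ 201 + (-2) * b ^ 200) + ((-1) * b ^ 199 + (-1) * b ^ 198))) + ((((-1) * b ^ 197 + (-1) * b ^ 196) + ((-2) * b ^ 195 + (-1) *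 b ^ 194)) + (((-1) * b ^ 193 + (-1) * b ^ 192) + ((-2) * b ^ 191 + (-2) * b ^ 190)))))) + ((((((-2) * b ^ 189 + ((-1) * b ^ 188 + (-2) * b ^ 187)) + (((-2) * b ^ 186 + (-2) * b ^ 185) + ((-2) * b ^ 184 + (-2) * b ^ 183))) + ((((-2) * b ^ 182 + (-1) * b ^ 181) + ((-1) * b ^ 180 + (-2) * b ^ 179)) + (((-2) * b ^ 178 + (-1) * b ^ 177) + ((-1) * b ^ 176 + (-2) * b ^ 175)))) + (((((-2) * b ^ 174 + (-2) * b ^ 173) + ((-2) * b ^ 172 + (-2) * b ^ 171)) + (((-2) * b ^ 170 + (-2) * b ^ 169) + ((-3) * b ^ 168 + (-2) * b ^ 167))) + ((((-2) * b ^ 166 + (-2) * b ^ 165) + ((-2) * b ^ 164 + (-3) * b ^ 163)) + (((-2) * b ^ 162 + (-1) * b ^ 161) + ((-2) * b ^ 160 + (-2) * b ^ 159))))) + ((((((-2) * b ^ 158 + (-2) * b ^ 157) + ((-1) * b ^ 156 + (-2) * b ^ 155)) + (((-2) * b ^ 154 + (-2) * b ^ 153) + ((-1) * b ^ 152 + (-1)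 * b ^ 151))) + ((((-2) * b ^ 150 + (-2) * b ^ 149) + ((-2) * b ^ 148 + (-2) * b ^ 147)) + (((-3) * b ^ 146 + (-3) * b ^ 145) + ((-3) * b ^ 144 + (-2) * b ^ 143)))) + (((((-2) * b ^ 142 + (-3) * b ^ 141) + ((-3) * b ^ 140 + (-2) * b ^ 139)) + (((-2) * b ^ 138 + (-2) * b ^ 137) + ((-2) * b ^ 136 + (-2) * b ^ 135))) + ((((-1) * b ^ 134 + (-2) * b ^ 133) + ((-1) * b ^ 132 + (-2) * b ^ 131)) + (((-2) * b ^ 130 + (-2) * b ^ 129) + ((-2) * b ^ 128 + (-2) * b ^ 127))))))) + (((((((-2) * b ^ 126 + ((-2) * b ^ 125 + (-2) * b ^ 124)) + (((-2) * b ^ 123 + (-2) * b ^ 122) + ((-2) * b ^ 121 + (-2) * b ^ 120))) + ((((-3) * b ^ 119 + (-2) * b ^ 118) + ((-2) * b ^ 117 + (-2) * b ^ 116)) + (((-2) * b ^ 115 + (-2) * b ^ 114) + ((-1) * b ^ 113 + (-1) * b ^ 112)))) + (((((-1) * b ^ 111 + (-1) * b ^ 110) + ((-2) * b ^ 109 +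 (-1) * b ^ 108)) + (((-2) * b ^ 107 + (-2) * b ^ 106) + ((-2) * b ^ 105 + (-3) * b ^ 104))) + ((((-2) * b ^ 103 + (-3) * b ^ 102) + ((-2) * b ^ 101 + (-2) * b ^ 100)) + (((-2) * b ^ 99 + (-2) * b ^ 98) + ((-3) * b ^ 97 + (-2) * b ^ 96))))) + ((((((-2) * b ^ 95 + (-2) * b ^ 94) + ((-3) * b ^ 93 + (-2) * b ^ 92)) + (((-2) * b ^ 91 + (-2) * b ^ 90) + ((-2) * b ^ 89 + (-2) * b ^ 88))) + ((((-1) * b ^ 87 + (-1) * b ^ 86) + ((-2) * b ^ 85 + (-1) * b ^ 84)) + (((-1) * b ^ 83 + (-1) * b ^ 82) + ((-1) * b ^ 81 + (-1) * b ^ 80)))) + (((((-1) * b ^ 79 + (-2) * b ^ 78) + ((-1) * b ^ 77 + (-1) * b ^ 76)) + (((-2) * b ^ 75 + (-2) * b ^ 74) + ((-2) * b ^ 73 + (-1) * b ^ 72))) + ((((-1) * b ^ 71 + (-2) * b ^ 70) + ((-2) * b ^ 69 + (-2) * b ^ 68)) + (((-2) * b ^ 67 + (-2) * b ^ 66) +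 ((-3) * b ^ 65 + (-2) * b ^ 64)))))) + ((((((-2) * b ^ 63 + ((-2) * b ^ 62 + (-1) * b ^ 61)) + (((-2) * b ^ 60 + (-1) * b ^ 59) + ((-1) * b ^ 58 + (-1) * b ^ 57))) + ((((-1) * b ^ 56 + (-1) * b ^ 55) + ((-1) * b ^ 54 + (-2) * b ^ 53)) + (((-2) * b ^ 52 + (-2) * b ^ 51) + ((-3) * b ^ 50 + (-3) * b ^ 49)))) + (((((-3) * b ^ 48 + (-3) * b ^ 47) + ((-3) * b ^ 46 + (-3) * b ^ 45)) + (((-2) * b ^ 44 + (-2) * b ^ 43) + ((-3) * b ^ 42 + (-2) * b ^ 41))) + ((((-2) * b ^ 40 + (-2) * b ^ 39) + ((-2) * b ^ 38 + (-2) * b ^ 37)) + (((-2) * b ^ 36 + (-2) * b ^ 35) + ((-2) * b ^ 34 + (-2) * b ^ 33))))) + ((((((-3) * b ^ 32 + (-3) * b ^ 31) + ((-2) * b ^ 30 + (-2) * b ^ 29)) + (((-2) * b ^ 28 + (-2) * b ^ 27) + ((-1) * b ^ 26 + (-2) * b ^ 25))) + ((((-1) * b ^ 24 + (-1) * b ^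 23) + ((-2) * b ^ 22 + (-1) * b ^ 21)) + (((-2) * b ^ 20 + (-1) * b ^ 19) + ((-2) * b ^ 18 + (-2) * b ^ 17)))) + (((((-1) * b ^ 16 + (-2) * b ^ 15) + ((-1) * b ^ 14 + (-2) * b ^ 13)) + (((-2) * b ^ 12 + (-2) * b ^ 11) + ((-2) * b ^ 10 + (-1) * b ^ 9))) + ((((-2) * b ^ 8 + (-2) * b ^ 7) + ((-1) * b ^ 6 + (-1) * b ^ 5)) + (((-1) * b ^ 4 + (-1) * b ^ 3) + ((-1) * b ^ 2 + (-1) * b)))))))))) * h2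
  have hper : ∀ k : ℕ, b ^ (2 ^ (k + 10)) = b ^ (2 ^ k) := by
    intro k
    rw [show 2 ^ (k + 10) = 1024 * 2 ^ k by rw [pow_add]; ring, pow_mul, hq]
  have hmod : ∀ k : ℕ, b ^ (2 ^ k) = b ^ (2 ^ (k % 10)) := by
    intro k
    induction k using Nat.strong_induction_on with
    | _ k ih =>
      by_cases h : k < 10
      · rw [Nat.mod_eq_of_lt h]
      · have hk : k = (k - 10) + 10 := by omega
        rw [hk, hper, ih (k - 10) (by omega), Nat.add_mod_right]
  have hf' : b ^ 33 + b ^ 66 + b ^ 132 + b ^ 264 + b ^ 528 = 0 := by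
    linear_combination (((((((b ^ 518 + (b ^ 514 + b ^ 513)) + ((b ^ 511 + b ^ 509) + (b ^ 506 + b ^ 505))) + ((b ^ 502 + (b ^ 498 + b ^ 497)) + ((b ^ 493 + b ^ 491) + (b ^ 489 + b ^ 488)))) + (((b ^ 483 + (b ^ 481 + b ^ 479)) + ((b ^ 477 + b ^ 474) + (b ^ 473 + b ^ 472))) + (((b ^ 470 + b ^ 468) + (b ^ 467 + b ^ 466)) + ((b ^ 463 + b ^ 461) + (b ^ 460 + b ^ 457))))) + ((((b ^ 452 + (b ^ 449 + b ^ 443)) + ((b ^ 441 + b ^ 440) + (b ^ 438 + b ^ 437))) + ((b ^ 436 + (b ^ 434 + b ^ 433)) + ((b ^ 429 + b ^ 427) + (b ^ 426 + b ^ 425)))) + (((b ^ 424 + (b ^ 422 + b ^ 421)) + ((b ^ 415 + b ^ 414) + (b ^ 409 + b ^ 408))) + (((b ^ 405 + b ^ 404) + (b ^ 403 + b ^ 402)) + ((b ^ 401 + b ^ 393) + (b ^ 391 + b ^ 389)))))) + (((((b ^ 388 + (b ^ 387 + b ^ 382)) + ((b ^ 381 + b ^ 380) + (b ^ 379 + b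 ^ 378))) + ((b ^ 377 + (b ^ 375 + b ^ 373)) + ((b ^ 372 + b ^ 371) + (b ^ 370 + b ^ 368)))) + (((b ^ 363 + (b ^ 362 + b ^ 361)) + ((b ^ 358 + b ^ 350) + (b ^ 349 + b ^ 348))) + (((b ^ 346 + b ^ 342) + (b ^ 340 + b ^ 339)) + ((b ^ 338 + b ^ 335) + (b ^ 334 + b ^ 333))))) + ((((b ^ 332 + (b ^ 330 + b ^ 327)) + ((b ^ 325 + b ^ 324) + (b ^ 322 + b ^ 318))) + ((b ^ 315 + (b ^ 314 + b ^ 312)) + ((b ^ 310 + b ^ 308) + (b ^ 307 + b ^ 306)))) + (((b ^ 304 + (b ^ 301 + b ^ 298)) + ((b ^ 296 + b ^ 295) + (b ^ 294 + b ^ 290))) + (((b ^ 289 + b ^ 288) + (b ^ 287 + b ^ 284)) + ((b ^ 283 + b ^ 282) + (b ^ 281 + b ^ 280))))))) + ((((((b ^ 279 + (b ^ 275 + b ^ 274)) + ((b ^ 268 + b ^ 263) + (b ^ 261 + b ^ 260))) + ((b ^ 257 + (b ^ 256 + b ^ 254)) + ((b ^ 251 + b ^ 250) + (b ^ 249 +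 b ^ 245)))) + (((b ^ 244 + (b ^ 242 + b ^ 237)) + ((b ^ 235 + b ^ 231) + (b ^ 229 + b ^ 227))) + (((b ^ 222 + b ^ 215) + (b ^ 214 + b ^ 213)) + ((b ^ 212 + b ^ 211) + (b ^ 208 + b ^ 204))))) + ((((b ^ 198 + (b ^ 197 + b ^ 196)) + ((b ^ 195 + b ^ 191) + (b ^ 190 + b ^ 189))) + ((b ^ 185 + (b ^ 182 + b ^ 180)) + ((b ^ 179 + b ^ 172) + (b ^ 169 + b ^ 168)))) + (((b ^ 167 + (b ^ 164 + b ^ 163)) + ((b ^ 162 + b ^ 159) + (b ^ 157 + b ^ 153))) + (((b ^ 152 + b ^ 151) + (b ^ 149 + b ^ 148)) + ((b ^ 147 + b ^ 145) + (b ^ 144 + b ^ 143)))))) + (((((b ^ 140 + (b ^ 139 + b ^ 137)) + ((b ^ 135 + b ^ 134) + (b ^ 133 + b ^ 132))) + ((b ^ 131 + (b ^ 130 + b ^ 127)) + ((b ^ 126 + b ^ 125) + (b ^ 123 + b ^ 120)))) + (((b ^ 119 + (b ^ 117 + b ^ 113)) + ((b ^ 112 + b ^ 110) + (b ^ 109 +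 b ^ 108))) + (((b ^ 102 + b ^ 101) + (b ^ 100 + b ^ 93)) + ((b ^ 92 + b ^ 90) + (b ^ 89 + b ^ 87))))) + ((((b ^ 84 + (b ^ 79 + b ^ 78)) + ((b ^ 76 + b ^ 74) + (b ^ 73 + b ^ 71))) + (((b ^ 70 + b ^ 69) + (b ^ 68 + b ^ 67)) + ((b ^ 66 + b ^ 64) + (b ^ 63 + b ^ 62)))) + (((b ^ 61 + (b ^ 60 + b ^ 58)) + ((b ^ 57 + b ^ 54) + (b ^ 51 + b ^ 49))) + (((b ^ 47 + b ^ 44) + (b ^ 42 + b ^ 40)) + ((b ^ 39 + b ^ 37) + (b ^ 34 + b ^ 33)))))))) * hb + (((((((((-1) * b ^ 524 + ((-1) * b ^ 523 + (-1) * b ^ 521)) + (((-1) * b ^ 520 + (-2) * b ^ 519) + ((-1) * b ^ 518 + (-1) * b ^ 517))) + ((((-2) * b ^ 516 + (-2) * b ^ 515) + ((-2) * b ^ 514 + (-1) * b ^ 513)) + (((-2) * b ^ 512 + (-2) * b ^ 511) + ((-1) * b ^ 510 + (-1) * b ^ 509)))) + ((((-2) * b ^ 508 + ((-2) * b ^ 507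 + (-1) * b ^ 506)) + (((-1) * b ^ 505 + (-1) * b ^ 504) + ((-2) * b ^ 503 + (-1) * b ^ 502))) + ((((-1) * b ^ 501 + (-1) * b ^ 500) + ((-2) * b ^ 499 + (-2) * b ^ 498)) + (((-1) * b ^ 497 + (-1) * b ^ 496) + ((-1) * b ^ 495 + (-2) * b ^ 494))))) + (((((-2) * b ^ 493 + ((-1) * b ^ 492 + (-2) * b ^ 491)) + (((-1) * b ^ 490 + (-2) * b ^ 489) + ((-1) * b ^ 488 + (-1) * b ^ 487))) + ((((-1) * b ^ 486 + (-1) * b ^ 485) + ((-2) * b ^ 484 + (-2) * b ^ 483)) + (((-2) * b ^ 482 + (-1) * b ^ 481) + ((-2) * b ^ 480 + (-2) * b ^ 479)))) + ((((-2) * b ^ 478 + ((-2) * b ^ 477 + (-2) * b ^ 476)) + (((-2) * b ^ 475 + (-2) * b ^ 474) + ((-3) * b ^ 473 + (-2) * b ^ 472))) + ((((-2) * b ^ 471 + (-2) * b ^ 470) + ((-2) * b ^ 469 + (-2) * b ^ 468)) + (((-2) * b ^ 467 + (-2) * b ^ 466) + ((-1) * b ^ 465 + (-1) * b ^ 464))))))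 + ((((((-2) * b ^ 463 + ((-2) * b ^ 462 + (-1) * b ^ 461)) + (((-1) * b ^ 460 + (-1) * b ^ 459) + ((-1) * b ^ 458 + (-1) * b ^ 457))) + ((((-1) * b ^ 455 + (-1) * b ^ 454) + ((-1) * b ^ 453 + (-1) * b ^ 452)) + (((-1) * b ^ 451 + (-1) * b ^ 450) + ((-1) * b ^ 449 + (-1) * b ^ 448)))) + ((((-1) * b ^ 447 + ((-2) * b ^ 446 + (-1) * b ^ 445)) + (((-2) * b ^ 444 + (-3) * b ^ 443) + ((-2) * b ^ 442 + (-2) * b ^ 441))) + ((((-2) * b ^ 440 + (-3) * b ^ 439) + ((-2) * b ^ 438 + (-2) * b ^ 437)) + (((-2) * b ^ 436 + (-2) * b ^ 435) + ((-2) * b ^ 434 + (-1) * b ^ 433))))) + (((((-2) * b ^ 432 + ((-2) * b ^ 431 + (-2) * b ^ 430)) + (((-2) * b ^ 429 + (-2) * b ^ 428) + ((-3) * b ^ 427 + (-2) * b ^ 426))) + ((((-2) * b ^ 425 + (-2) * b ^ 424) + ((-1) * b ^ 423 + (-1) * b ^ 422)) + (((-1) * b ^ 421 + (-1) * b ^ 420)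 + ((-1) * b ^ 419 + (-1) * b ^ 418)))) + (((((-1) * b ^ 417 + (-1) * b ^ 416) + ((-2) * b ^ 415 + (-2) * b ^ 414)) + (((-1) * b ^ 413 + (-1) * b ^ 412) + ((-2) * b ^ 411 + (-2) * b ^ 410))) + ((((-2) * b ^ 409 + (-2) * b ^ 408) + ((-2) * b ^ 407 + (-2) * b ^ 406)) + (((-2) * b ^ 405 + (-2) * b ^ 404) + ((-2) * b ^ 403 + (-1) * b ^ 402))))))) + (((((((-1) * b ^ 401 + ((-1) * b ^ 399 + (-1) * b ^ 398)) + (((-1) * b ^ 397 + (-1) * b ^ 396) + ((-1) * b ^ 395 + (-2) * b ^ 394))) + ((((-2) * b ^ 393 + (-2) * b ^ 392) + ((-2) * b ^ 391 + (-2) * b ^ 390)) + (((-2) * b ^ 389 + (-2) * b ^ 388) + ((-2) * b ^ 387 + (-1) * b ^ 386)))) + ((((-2) * b ^ 385 + ((-2) * b ^ 384 + (-3) * b ^ 383)) + (((-3) * b ^ 382 + (-3) * b ^ 381) + ((-3) * b ^ 380 + (-2) * b ^ 379))) + ((((-3) * b ^ 378 + (-2) * b ^ 377) + ((-2) * b ^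 376 + (-2) * b ^ 375)) + (((-2) * b ^ 374 + (-3) * b ^ 373) + ((-2) * b ^ 372 + (-2) * b ^ 371))))) + (((((-1) * b ^ 370 + ((-1) * b ^ 369 + (-2) * b ^ 368)) + (((-1) * b ^ 367 + (-1) * b ^ 366) + ((-1) * b ^ 365 + (-2) * b ^ 364))) + ((((-2) * b ^ 363 + (-1) * b ^ 362) + ((-1) * b ^ 361 + (-1) * b ^ 360)) + (((-1) * b ^ 359 + (-1) * b ^ 358) + ((-1) * b ^ 356 + (-1) * b ^ 355)))) + ((((-1) * b ^ 354 + ((-1) * b ^ 353 + (-2) * b ^ 352)) + (((-2) * b ^ 351 + (-2) * b ^ 350) + ((-2) * b ^ 349 + (-2) * b ^ 348))) + ((((-1) * b ^ 347 + (-1) * b ^ 346) + ((-2) * b ^ 345 + (-2) * b ^ 344)) + (((-2) * b ^ 343 + (-2) * b ^ 342) + ((-2) * b ^ 341 + (-3) * b ^ 340)))))) + ((((((-2) * b ^ 339 + ((-2) * b ^ 338 + (-2) * b ^ 337)) + (((-2) * b ^ 336 + (-3) * b ^ 335) + ((-2) * b ^ 334 + (-2) * b ^ 333))) + ((((-2)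 * b ^ 332 + (-1) * b ^ 331) + ((-2) * b ^ 330 + (-1) * b ^ 329)) + (((-2) * b ^ 328 + (-2) * b ^ 327) + ((-1) * b ^ 326 + (-2) * b ^ 325)))) + ((((-2) * b ^ 324 + ((-1) * b ^ 323 + (-1) * b ^ 322)) + (((-1) * b ^ 321 + (-2) * b ^ 320) + ((-1) * b ^ 319 + (-2) * b ^ 318))) + ((((-2) * b ^ 317 + (-2) * b ^ 316) + ((-2) * b ^ 315 + (-2) * b ^ 314)) + (((-2) * b ^ 313 + (-2) * b ^ 312) + ((-2) * b ^ 311 + (-2) * b ^ 310))))) + (((((-2) * b ^ 309 + ((-2) * b ^ 308 + (-2) * b ^ 307)) + (((-2) * b ^ 306 + (-1) * b ^ 305) + ((-2) * b ^ 304 + (-1) * b ^ 303))) + ((((-1) * b ^ 302 + (-2) * b ^ 301) + ((-2) * b ^ 300 + (-2) * b ^ 299)) + (((-2) * b ^ 298 + (-2) * b ^ 297) + ((-2) * b ^ 296 + (-2) * b ^ 295)))) + (((((-2) * b ^ 294 + (-2) * b ^ 293) + ((-2) * b ^ 292 + (-2) * b ^ 291)) + (((-3) * b ^ 290 + (-3)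 * b ^ 289) + ((-2) * b ^ 288 + (-2) * b ^ 287))) + ((((-2) * b ^ 286 + (-3) * b ^ 285) + ((-3) * b ^ 284 + (-2) * b ^ 283)) + (((-2) * b ^ 282 + (-2) * b ^ 281) + ((-2) * b ^ 280 + (-1) * b ^ 279)))))))) + ((((((((-1) * b ^ 278 + ((-1) * b ^ 277 + (-1) * b ^ 276)) + (((-1) * b ^ 275 + (-1) * b ^ 274) + ((-1) * b ^ 273 + (-1) * b ^ 271))) + ((((-1) * b ^ 270 + (-1) * b ^ 269) + ((-1) * b ^ 268 + (-1) * b ^ 267)) + (((-2) * b ^ 266 + (-1) * b ^ 265) + ((-1) * b ^ 264 + (-2) * b ^ 263)))) + ((((-2) * b ^ 262 + ((-2) * b ^ 261 + (-2) * b ^ 260)) + (((-2) * b ^ 259 + (-1) * b ^ 258) + ((-2) * b ^ 257 + (-2) * b ^ 256))) + ((((-2) * b ^ 255 + (-2) * b ^ 254) + ((-1) * b ^ 253 + (-2) * b ^ 252)) + (((-2) * b ^ 251 + (-2) * b ^ 250) + ((-1) * b ^ 249 + (-1) * b ^ 248))))) + (((((-2) * b ^ 247 + ((-1) * b ^ 246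 + (-2) * b ^ 245)) + (((-1) * b ^ 244 + (-1) * b ^ 243) + ((-1) * b ^ 242 + (-1) * b ^ 241))) + ((((-1) * b ^ 240 + (-1) * b ^ 239) + ((-1) * b ^ 238 + (-2) * b ^ 237)) + (((-1) * b ^ 236 + (-1) * b ^ 235) + ((-1) * b ^ 234 + (-1) * b ^ 233)))) + ((((-2) * b ^ 232 + ((-1) * b ^ 231 + (-1) * b ^ 230)) + (((-1) * b ^ 229 + (-1) * b ^ 228) + ((-1) * b ^ 227 + (-1) * b ^ 225))) + ((((-1) * b ^ 224 + (-1) * b ^ 223) + ((-1) * b ^ 222 + (-1) * b ^ 221)) + (((-1) * b ^ 220 + (-1) * b ^ 219) + ((-2) * b ^ 218 + (-2) * b ^ 217)))))) + ((((((-2) * b ^ 216 + ((-2) * b ^ 215 + (-3) * b ^ 214)) + (((-2) * b ^ 213 + (-1) * b ^ 212) + ((-1) * b ^ 211 + (-1) * b ^ 210))) + ((((-1) * b ^ 209 + (-1) * b ^ 208) + ((-1) * b ^ 207 + (-1) * b ^ 206)) + (((-1) * b ^ 205 + (-1) * b ^ 204) + ((-1) * b ^ 203 + (-1) * b ^ 202))))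 + ((((-2) * b ^ 201 + ((-2) * b ^ 200 + (-2) * b ^ 199)) + (((-2) * b ^ 198 + (-2) * b ^ 197) + ((-2) * b ^ 196 + (-2) * b ^ 195))) + ((((-1) * b ^ 194 + (-1) * b ^ 193) + ((-2) * b ^ 192 + (-2) * b ^ 191)) + (((-2) * b ^ 190 + (-1) * b ^ 189) + ((-1) * b ^ 188 + (-1) * b ^ 187))))) + (((((-1) * b ^ 186 + ((-2) * b ^ 185 + (-1) * b ^ 184)) + (((-1) * b ^ 183 + (-2) * b ^ 182) + ((-1) * b ^ 181 + (-1) * b ^ 180))) + ((((-1) * b ^ 179 + (-1) * b ^ 178) + ((-1) * b ^ 177 + (-1) * b ^ 175)) + (((-2) * b ^ 174 + (-2) * b ^ 173) + ((-2) * b ^ 172 + (-1) * b ^ 171)))) + (((((-2) * b ^ 170 + (-3) * b ^ 169) + ((-2) * b ^ 168 + (-2) * b ^ 167)) + (((-1) * b ^ 166 + (-2) * b ^ 165) + ((-2) * b ^ 164 + (-2) * b ^ 163))) + ((((-2) * b ^ 162 + (-1) * b ^ 161) + ((-1) * b ^ 160 + (-2) * b ^ 159)) + (((-2) * b ^ 158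 + (-2) * b ^ 157) + ((-1) * b ^ 156 + (-2) * b ^ 155))))))) + (((((((-3) * b ^ 154 + ((-3) * b ^ 153 + (-2) * b ^ 152)) + (((-2) * b ^ 151 + (-3) * b ^ 150) + ((-3) * b ^ 149 + (-2) * b ^ 148))) + ((((-2) * b ^ 147 + (-2) * b ^ 146) + ((-3) * b ^ 145 + (-2) * b ^ 144)) + (((-2) * b ^ 143 + (-2) * b ^ 142) + ((-2) * b ^ 141 + (-3) * b ^ 140)))) + ((((-2) * b ^ 139 + ((-2) * b ^ 138 + (-3) * b ^ 137)) + (((-3) * b ^ 136 + (-3) * b ^ 135) + ((-2) * b ^ 134 + (-3) * b ^ 133))) + ((((-2) * b ^ 132 + (-2) * b ^ 131) + ((-2) * b ^ 130 + (-2) * b ^ 129)) + (((-2) * b ^ 128 + (-2) * b ^ 127) + ((-2) * b ^ 126 + (-2) * b ^ 125))))) + (((((-1) * b ^ 124 + ((-2) * b ^ 123 + (-2) * b ^ 122)) + (((-1) * b ^ 121 + (-2) * b ^ 120) + ((-2) * b ^ 119 + (-2) * b ^ 118))) + ((((-1) * b ^ 117 + (-1) * b ^ 116) + ((-2) * b ^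 115 + (-2) * b ^ 114)) + (((-2) * b ^ 113 + (-2) * b ^ 112) + ((-2) * b ^ 111 + (-2) * b ^ 110)))) + ((((-1) * b ^ 109 + ((-1) * b ^ 108 + (-1) * b ^ 107)) + (((-1) * b ^ 106 + (-1) * b ^ 105) + ((-1) * b ^ 104 + (-2) * b ^ 103))) + ((((-2) * b ^ 102 + (-1) * b ^ 101) + ((-1) * b ^ 100 + (-1) * b ^ 99)) + (((-1) * b ^ 98 + (-1) * b ^ 97) + ((-1) * b ^ 96 + (-2) * b ^ 95)))))) + ((((((-2) * b ^ 94 + ((-2) * b ^ 93 + (-2) * b ^ 92)) + (((-1) * b ^ 91 + (-2) * b ^ 90) + ((-2) * b ^ 89 + (-1) * b ^ 88))) + ((((-1) * b ^ 87 + (-1) * b ^ 86) + ((-1) * b ^ 85 + (-2) * b ^ 84)) + (((-1) * b ^ 83 + (-1) * b ^ 82) + ((-2) * b ^ 81 + (-2) * b ^ 80)))) + ((((-3) * b ^ 79 + ((-2) * b ^ 78 + (-2) * b ^ 77)) + (((-3) * b ^ 76 + (-2) * b ^ 75) + ((-3) * b ^ 74 + (-3) * b ^ 73))) + ((((-3)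 * b ^ 72 + (-3) * b ^ 71) + ((-3) * b ^ 70 + (-3) * b ^ 69)) + (((-3) * b ^ 68 + (-3) * b ^ 67) + ((-2) * b ^ 66 + (-2) * b ^ 65))))) + (((((-3) * b ^ 64 + ((-3) * b ^ 63 + (-2) * b ^ 62)) + (((-2) * b ^ 61 + (-2) * b ^ 60) + ((-2) * b ^ 59 + (-1) * b ^ 58))) + ((((-2) * b ^ 57 + (-1) * b ^ 56) + ((-1) * b ^ 55 + (-2) * b ^ 54)) + (((-1) * b ^ 53 + (-2) * b ^ 52) + ((-1) * b ^ 51 + (-2) * b ^ 50)))) + (((((-2) * b ^ 49 + (-1) * b ^ 48) + ((-2) * b ^ 47 + (-1) * b ^ 46)) + (((-2) * b ^ 45 + (-2) * b ^ 44) + ((-2) * b ^ 43 + (-2) * b ^ 42))) + ((((-1) * b ^ 41 + (-2) * b ^ 40) + ((-2) * b ^ 39 + (-1) * b ^ 38)) + (((-1) * b ^ 37 + (-1) * b ^ 36) + ((-1) * b ^ 35 + (-1) * b ^ 34))))))))) * h2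
  have e1 : b ^ 2112 = b ^ 66 := by
    rw [show (2112 : ℕ) = 1024 * 2 + 64 from rfl, pow_add, pow_mul, hq]; ring
  have e2 : b ^ 8448 = b ^ 264 := by
    rw [show (8448 : ℕ) = 1024 * 8 + 256 from rfl, pow_add, pow_mul, hq]; ring
  have key : ∀ k : ℕ, (b ^ 33) ^ (2 ^ k) = b ^ (33 * 2 ^ (k % 10)) := by
    intro k
    rw [← pow_mul, mul_comm, pow_mul, hmod, ← pow_mul, mul_comm]
  rw [key, key, key, key]
  have hr5 : m % 5 ≠ 0 := by
    intro h
    have h1 : 5 ∣ m := Nat.dvd_of_mod_eq_zero h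
    have h2' : Nat.gcd 5 m = 5 := Nat.gcd_eq_left h1
    omega
  obtain ⟨q, r, hr, hmq⟩ : ∃ q r, r = m % 5 ∧ m = 5 * q + r :=
    ⟨m / 5, m % 5, rfl, (Nat.div_add_mod m 5).symm⟩
  have hrlt : r < 5 := hr ▸ Nat.mod_lt m (by norm_num)
  have hrne : r ≠ 0 := hr ▸ hr5
  subst hmq
  interval_cases r <;>
    [skip;
     (rw [show 2 * (5 * q + 1) % 10 = 2 by omega, show 4 * (5 * q + 1) % 10 = 4 by omega,
         show 6 * (5 * q + 1) % 10 = 6 by omega, show 8 * (5 * q + 1) % 10 = 8 by omega]);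
     (rw [show 2 * (5 * q + 2) % 10 = 4 by omega, show 4 * (5 * q + 2) % 10 = 8 by omega,
         show 6 * (5 * q + 2) % 10 = 2 by omega, show 8 * (5 * q + 2) % 10 = 6 by omega]);
     (rw [show 2 * (5 * q + 3) % 10 = 6 by omega, show 4 * (5 * q + 3) % 10 = 2 by omega,
         show 6 * (5 * q + 3) % 10 = 8 by omega, show 8 * (5 * q + 3) % 10 = 4 by omega]);
     (rw [show 2 * (5 * q + 4) % 10 = 8 by omega, show 4 * (5 * q + 4) % 10 = 6 by omega,
         show 6 * (5 * q + 4) % 10 = 4 by omega, show 8 * (5 * q + 4) % 10 = 2 by omega])] <;>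
  first
    | exact absurd rfl hrne
    | (norm_num; linear_combination hf' + e1 + e2)
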